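/- Define the consistent Bellman operator on q : S × A → ℝ by (T_c q)(s,a) = r(s,a) + γ Σ_{s'} p(s'|s,a) · [ 1_{s' ≠ s} · max_{a'} q(s',a') + 1_{s' = s} · q(s,a) ]. Then T_c is a γ-contraction with respect to the supremum norm on bounded functions S × A → ℝ. -/
import Mathlib


/-- The consistent Bellman operator on state-action value functions of a finite MDP. -/
noncomputable def consistentBellman {S A : Type*} [Fintype S] [Fintype A] [DecidableEq S]
    (p : S → A → S → ℝ) (r : S → A → ℝ) (γ : ℝ) (q : S → A → ℝ) : S → A → ℝ :=
  fun s a => r s a + γ * ∑ s', p s a s' *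
    (if s' = s then q s a else ⨆ a' : A, q s' a')

private lemma ciSup_abs_sub {A : Type*} [Fintype A] [Nonempty A] (f g : A → ℝ) {c : ℝ}
    (h : ∀ a, |f a - g a| ≤ c) : |(⨆ a, f a) - ⨆ a, g a| ≤ c := by
  have hb : ∀ h : A → ℝ, BddAbove (Set.range h) := fun h => Set.Finite.bddAbove (Set.finite_range h)
  rw [abs_sub_le_iff]
  constructor
  · rw [sub_le_iff_le_add]
    refine ciSup_le fun a => ?_
    have := (abs_sub_le_iff.mp (h a)).1
    calc f a ≤ g a + c := by linarith
      _ ≤ (⨆ a, g a) + c := by gcongr; exact le_ciSup (hb g) a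
      _ = c + ⨆ a, g a := add_comm _ _
  · rw [sub_le_iff_le_add]
    refine ciSup_le fun a => ?_
    have := (abs_sub_le_iff.mp (h a)).2
    calc g a ≤ f a + c := by linarith
      _ ≤ (⨆ a, f a) + c := by gcongr; exact le_ciSup (hb f) a
      _ = c + ⨆ a, f a := add_comm _ _

theorem stmt_17 {S A : Type*} [Fintype S] [Nonempty S] [Fintype A] [Nonempty A]
    [DecidableEq S]
    (p : S → A → S → ℝ) (hp0 : ∀ s a s', 0 ≤ p s a s')
    (hp1 : ∀ s a, ∑ s', p s a s' = 1)
    (r : S → A → ℝ) (γ : ℝ) (hγ0 : 0 ≤ γ) (hγ1 : γ < 1) :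
    ∀ u v : S → A → ℝ,
      ‖consistentBellman p r γ u - consistentBellman p r γ v‖ ≤ γ * ‖u - v‖ := by
  intro u v
  have hnorm : ∀ s a, |u s a - v s a| ≤ ‖u - v‖ := by
    intro s a
    calc |u s a - v s a| = ‖(u - v) s a‖ := rfl
      _ ≤ ‖(u - v) s‖ := norm_le_pi_norm ((u - v) s) a
      _ ≤ ‖u - v‖ := norm_le_pi_norm (u - v) s
  have hkey : ∀ s a, |(consistentBellman p r γ u - consistentBellman p r γ v) s a|
      ≤ γ * ‖u - v‖ := by
    intro s a
    have : (consistentBellman p r γ u - consistentBellman p r γ v) s a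
        = γ * ∑ s', p s a s' *
          ((if s' = s then u s a else ⨆ a' : A, u s' a')
            - (if s' = s then v s a else ⨆ a' : A, v s' a')) := by
      simp [consistentBellman, Finset.mul_sum, mul_sub, Finset.sum_sub_distrib]
    rw [this, abs_mul, abs_of_nonneg hγ0]
    gcongr
    calc |∑ s', p s a s' * ((if s' = s then u s a else ⨆ a' : A, u s' a')
            - (if s' = s then v s a else ⨆ a' : A, v s' a'))|
        ≤ ∑ s', |p s a s' * ((if s' = s then u s a else ⨆ a' : A, u s' a')
            - (if s' = s then v s a else ⨆ a' : A, v s' a'))| := Finset.abs_sum_le_sum_abs _ _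
      _ ≤ ∑ s', p s a s' * ‖u - v‖ := by
          refine Finset.sum_le_sum fun s' _ => ?_
          rw [abs_mul, abs_of_nonneg (hp0 s a s')]
          refine mul_le_mul_of_nonneg_left ?_ (hp0 s a s')
          by_cases h : s' = s
          · simp only [h, if_true]
            exact hnorm s a
          · simp only [h, if_false]
            exact ciSup_abs_sub _ _ (fun a' => hnorm s' a')
      _ = ‖u - v‖ := by rw [← Finset.sum_mul, hp1, one_mul]
  rw [pi_norm_le_iff_of_nonneg (by positivity)]
  intro s
  rw [pi_norm_le_iff_of_nonneg (by positivity)]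
  intro a
  exact hkey s a
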